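/- Let G be a simple graph on vertex set [n] with edge set E, and define the 2ⁿ×2ⁿ complex matrices A₁ = Σ_{j=1}^{n} i·X_j and A₂ = Σ_{(j,k)∈E} i·Z_jZ_k. Then there exists a nonzero real number c such that [A₁, [A₁, [A₁, A₂]]] = c·[A₁, A₂] (in fact this holds with c = −16); hence the pair (A₂, A₁) admits a stable extension of length 2, and the QAOA-MaxCut generating set 𝓜_G = {A₁, A₂} is cyclic with common cycle length 2. -/

import Mathlib

open scoped Matrix

/-- The Pauli matrix `X`. -/
noncomputable def pauliX : Matrix (Fin 2) (Fin 2) ℂ := !![0, 1; 1, 0]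

/-- The Pauli matrix `Z`. -/
noncomputable def pauliZ : Matrix (Fin 2) (Fin 2) ℂ := !![1, 0; 0, -1]

/-- The `n`-qubit operator (a `2ⁿ×2ⁿ` matrix, indexed by `Fin n → Fin 2`) given as the
`n`-fold Kronecker product of the single-qubit operators `P 0, …, P (n-1)`. -/
noncomputable def nFoldKron {n : ℕ} (P : Fin n → Matrix (Fin 2) (Fin 2) ℂ) :
    Matrix (Fin n → Fin 2) (Fin n → Fin 2) ℂ :=
  Matrix.of fun f g => ∏ i, P i (f i) (g i)

/-- `X_j`: Pauli `X` on the `j`-th factor, identity elsewhere. -/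
noncomputable def qubitX (n : ℕ) (j : Fin n) :
    Matrix (Fin n → Fin 2) (Fin n → Fin 2) ℂ :=
  nFoldKron fun i => if i = j then pauliX else 1

/-- `Z_jZ_k`: Pauli `Z` on the `j`-th and `k`-th factors, identity elsewhere. -/
noncomputable def qubitZZ (n : ℕ) (j k : Fin n) :
    Matrix (Fin n → Fin 2) (Fin n → Fin 2) ℂ :=
  nFoldKron fun i => if i = j ∨ i = k then pauliZ else 1

/-- `A₁ = Σ_j i·X_j`. -/
noncomputable def qaoaA1 (n : ℕ) : Matrix (Fin n → Fin 2) (Fin n → Fin 2) ℂ :=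
  ∑ j, Complex.I • qubitX n j

/-- `A₂ = Σ_{(j,k)∈E} i·Z_jZ_k`, each edge of `G` counted once. -/
noncomputable def qaoaA2 (n : ℕ) (G : SimpleGraph (Fin n)) [DecidableRel G.Adj] :
    Matrix (Fin n → Fin 2) (Fin n → Fin 2) ℂ :=
  ∑ p ∈ Finset.univ.filter (fun p : Fin n × Fin n => G.Adj p.1 p.2 ∧ p.1 < p.2),
    Complex.I • qubitZZ n p.1 p.2

/-! ### Auxiliary lemmas -/

section Aux

attribute [local instance] LieRing.ofAssociativeRing
attribute [local instance] LieAlgebra.ofAssociativeAlgebra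

lemma kron_mul {n : ℕ} (P Q : Fin n → Matrix (Fin 2) (Fin 2) ℂ) :
    nFoldKron P * nFoldKron Q = nFoldKron fun i => P i * Q i := by
  ext f g
  simp only [nFoldKron, Matrix.mul_apply, Matrix.of_apply]
  rw [Finset.prod_univ_sum (fun _ : Fin n => (Finset.univ : Finset (Fin 2)))
    (fun i j => P i (f i) j * Q i j (g i)), Fintype.piFinset_univ]
  exact Finset.sum_congr rfl fun x _ => (Finset.prod_mul_distrib).symm

lemma nFoldKron_update {n : ℕ} (P : Fin n → Matrix (Fin 2) (Fin 2) ℂ) (j : Fin n)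
    (a : Matrix (Fin 2) (Fin 2) ℂ) (f g : Fin n → Fin 2) :
    nFoldKron (Function.update P j a) f g
      = a (f j) (g j) * ∏ i ∈ Finset.univ.erase j, P i (f i) (g i) := by
  simp only [nFoldKron, Matrix.of_apply]
  rw [← Finset.mul_prod_erase Finset.univ _ (Finset.mem_univ j), Function.update_self]
  congr 1
  exact Finset.prod_congr rfl fun i hi => by
    rw [Function.update_of_ne (Finset.ne_of_mem_erase hi)]

/-- The two-local operator: `a` at site `j`, `b` at site `k`, identity elsewhere. -/
noncomputable def twoL (n : ℕ) (j k : Fin n) (a b : Matrix (Fin 2) (Fin 2) ℂ) :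
    Matrix (Fin n → Fin 2) (Fin n → Fin 2) ℂ :=
  nFoldKron (fun i => if i = j then a else if i = k then b else 1)

lemma twoL_apply {n : ℕ} {j k : Fin n} (hjk : j ≠ k) (a b : Matrix (Fin 2) (Fin 2) ℂ)
    (f g : Fin n → Fin 2) :
    twoL n j k a b f g = a (f j) (g j) * (b (f k) (g k) *
      ∏ i ∈ (Finset.univ.erase j).erase k, (1 : Matrix (Fin 2) (Fin 2) ℂ) (f i) (g i)) := by
  have hfun : (fun i => if i = j then a else if i = k then b else (1 : Matrix (Fin 2) (Fin 2) ℂ))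
      = Function.update (Function.update (fun _ => 1) k b) j a := by
    funext i
    by_cases h1 : i = j
    · simp [h1, Function.update_apply, hjk]
    · by_cases h2 : i = k <;> simp [h1, h2, Function.update_apply]
  have : twoL n j k a b
      = nFoldKron (Function.update (Function.update (fun _ => 1) k b) j a) := by
    rw [twoL, hfun]
  rw [this, nFoldKron_update]
  congr 1
  rw [← Finset.mul_prod_erase _ _ (Finset.mem_erase.2 ⟨Ne.symm hjk, Finset.mem_univ k⟩),
    Function.update_self]
  congr 1
  exact Finset.prod_congr rfl fun i hi => by
    rw [Function.update_of_ne (Finset.ne_of_mem_erase hi)]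

lemma twoL_sub_left {n : ℕ} {j k : Fin n} (hjk : j ≠ k) (a a' b : Matrix (Fin 2) (Fin 2) ℂ) :
    twoL n j k (a - a') b = twoL n j k a b - twoL n j k a' b := by
  ext f g
  simp only [Matrix.sub_apply, twoL_apply hjk]
  ring

lemma twoL_sub_right {n : ℕ} {j k : Fin n} (hjk : j ≠ k) (a b b' : Matrix (Fin 2) (Fin 2) ℂ) :
    twoL n j k a (b - b') = twoL n j k a b - twoL n j k a b' := by
  ext f g
  simp only [Matrix.sub_apply, twoL_apply hjk]
  ring

lemma twoL_smul_left {n : ℕ} {j k : Fin n} (hjk : j ≠ k) (c : ℂ)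
    (a b : Matrix (Fin 2) (Fin 2) ℂ) :
    twoL n j k (c • a) b = c • twoL n j k a b := by
  ext f g
  simp only [Matrix.smul_apply, twoL_apply hjk, smul_eq_mul]
  ring

lemma twoL_smul_right {n : ℕ} {j k : Fin n} (hjk : j ≠ k) (c : ℂ)
    (a b : Matrix (Fin 2) (Fin 2) ℂ) :
    twoL n j k a (c • b) = c • twoL n j k a b := by
  ext f g
  simp only [Matrix.smul_apply, twoL_apply hjk, smul_eq_mul]
  ring

section XBrackets
variable {n : ℕ} {j k : Fin n}

lemma X_mul_twoL (hjk : j ≠ k) (a b : Matrix (Fin 2) (Fin 2) ℂ) :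
    qubitX n j * twoL n j k a b = twoL n j k (pauliX * a) b := by
  rw [qubitX, twoL, twoL, kron_mul]
  refine congrArg nFoldKron (funext fun i => ?_)
  by_cases h1 : i = j
  · simp [h1, hjk]
  · by_cases h2 : i = k <;> simp [h1, h2, hjk, Ne.symm hjk]

lemma twoL_mul_X (hjk : j ≠ k) (a b : Matrix (Fin 2) (Fin 2) ℂ) :
    twoL n j k a b * qubitX n j = twoL n j k (a * pauliX) b := by
  rw [qubitX, twoL, twoL, kron_mul]
  refine congrArg nFoldKron (funext fun i => ?_)
  by_cases h1 : i = j
  · simp [h1, hjk]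
  · by_cases h2 : i = k <;> simp [h1, h2, hjk, Ne.symm hjk]

lemma X_mul_twoL' (hjk : j ≠ k) (a b : Matrix (Fin 2) (Fin 2) ℂ) :
    qubitX n k * twoL n j k a b = twoL n j k a (pauliX * b) := by
  rw [qubitX, twoL, twoL, kron_mul]
  refine congrArg nFoldKron (funext fun i => ?_)
  by_cases h1 : i = j
  · simp [h1, hjk, Ne.symm hjk]
  · by_cases h2 : i = k <;> simp [h1, h2, hjk, Ne.symm hjk]

lemma twoL_mul_X' (hjk : j ≠ k) (a b : Matrix (Fin 2) (Fin 2) ℂ) :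
    twoL n j k a b * qubitX n k = twoL n j k a (b * pauliX) := by
  rw [qubitX, twoL, twoL, kron_mul]
  refine congrArg nFoldKron (funext fun i => ?_)
  by_cases h1 : i = j
  · simp [h1, hjk, Ne.symm hjk]
  · by_cases h2 : i = k <;> simp [h1, h2, hjk, Ne.symm hjk]

lemma X_comm_twoL {m : Fin n} (hmj : m ≠ j) (hmk : m ≠ k)
    (a b : Matrix (Fin 2) (Fin 2) ℂ) :
    qubitX n m * twoL n j k a b = twoL n j k a b * qubitX n m := by
  rw [qubitX, twoL, kron_mul, kron_mul]
  refine congrArg nFoldKron (funext fun i => ?_)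
  by_cases h1 : i = m
  · subst h1; simp [hmj, hmk, Ne.symm hmj, Ne.symm hmk]
  · by_cases h2 : i = j
    · simp [h1, h2, Ne.symm hmj]
    · by_cases h3 : i = k <;> simp [h1, h2, h3, Ne.symm hmk]

end XBrackets

lemma matrix_sum_lie {ι : Type*} (s : Finset ι) {m : Type*} [Fintype m] [DecidableEq m]
    (f : ι → Matrix m m ℂ) (M : Matrix m m ℂ) :
    ⁅∑ i ∈ s, f i, M⁆ = ∑ i ∈ s, ⁅f i, M⁆ := by
  simp [Ring.lie_def, Finset.sum_mul, Finset.mul_sum, Finset.sum_sub_distrib]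

lemma matrix_lie_sum {ι : Type*} (s : Finset ι) {m : Type*} [Fintype m] [DecidableEq m]
    (f : ι → Matrix m m ℂ) (M : Matrix m m ℂ) :
    ⁅M, ∑ i ∈ s, f i⁆ = ∑ i ∈ s, ⁅M, f i⁆ := by
  simp [Ring.lie_def, Finset.sum_mul, Finset.mul_sum, Finset.sum_sub_distrib]

/-- Bracketing `A₁` against a two-local operator acts slot-wise by `⁅X, ·⁆`. -/
lemma lie_A1_twoL {n : ℕ} {j k : Fin n} (hjk : j ≠ k) (a b : Matrix (Fin 2) (Fin 2) ℂ) :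
    ⁅qaoaA1 n, twoL n j k a b⁆
      = Complex.I • (twoL n j k ⁅pauliX, a⁆ b + twoL n j k a ⁅pauliX, b⁆) := by
  rw [qaoaA1, matrix_sum_lie]
  have hzero : ∀ m ∈ (Finset.univ : Finset (Fin n)), m ∉ ({j, k} : Finset (Fin n)) →
      ⁅Complex.I • qubitX n m, twoL n j k a b⁆ = 0 := by
    intro m _ hm
    simp only [Finset.mem_insert, Finset.mem_singleton, not_or] at hm
    rw [smul_lie, Ring.lie_def, X_comm_twoL hm.1 hm.2, sub_self, smul_zero]
  rw [← Finset.sum_subset (Finset.subset_univ {j, k}) hzero, Finset.sum_pair hjk,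
    smul_lie, smul_lie, ← smul_add]
  congr 1
  rw [Ring.lie_def, Ring.lie_def, X_mul_twoL hjk, twoL_mul_X hjk, X_mul_twoL' hjk,
    twoL_mul_X' hjk, ← twoL_sub_left hjk, ← twoL_sub_right hjk, Ring.lie_def, Ring.lie_def]

lemma pauli_fact : ⁅pauliX, ⁅pauliX, pauliZ⁆⁆ = (4 : ℂ) • pauliZ := by
  ext i j
  fin_cases i <;> fin_cases j <;>
    simp [Ring.lie_def, pauliX, pauliZ, Matrix.mul_apply, Fin.sum_univ_two] <;> norm_num

lemma qubitZZ_eq_twoL {n : ℕ} {j k : Fin n} (hjk : j ≠ k) :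
    qubitZZ n j k = twoL n j k pauliZ pauliZ := by
  rw [qubitZZ, twoL]
  refine congrArg nFoldKron (funext fun i => ?_)
  by_cases h1 : i = j
  · simp [h1]
  · by_cases h2 : i = k <;> simp [h1, h2]

/-- The per-edge cube-bracket identity. -/
lemma edge_cube {n : ℕ} {j k : Fin n} (hjk : j ≠ k) :
    ⁅qaoaA1 n, ⁅qaoaA1 n, ⁅qaoaA1 n, Complex.I • qubitZZ n j k⁆⁆⁆
      = (-16 : ℂ) • ⁅qaoaA1 n, Complex.I • qubitZZ n j k⁆ := by
  rw [qubitZZ_eq_twoL hjk]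
  have e1 := lie_A1_twoL hjk pauliZ pauliZ
  have e2 : ⁅qaoaA1 n, twoL n j k ⁅pauliX, pauliZ⁆ pauliZ⁆
      = Complex.I • ((4 : ℂ) • twoL n j k pauliZ pauliZ
          + twoL n j k ⁅pauliX, pauliZ⁆ ⁅pauliX, pauliZ⁆) := by
    rw [lie_A1_twoL hjk, pauli_fact, twoL_smul_left hjk]
  have e3 : ⁅qaoaA1 n, twoL n j k pauliZ ⁅pauliX, pauliZ⁆⁆
      = Complex.I • (twoL n j k ⁅pauliX, pauliZ⁆ ⁅pauliX, pauliZ⁆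
          + (4 : ℂ) • twoL n j k pauliZ pauliZ) := by
    rw [lie_A1_twoL hjk, pauli_fact, twoL_smul_right hjk]
  have e4 : ⁅qaoaA1 n, twoL n j k ⁅pauliX, pauliZ⁆ ⁅pauliX, pauliZ⁆⁆
      = Complex.I • ((4 : ℂ) • twoL n j k pauliZ ⁅pauliX, pauliZ⁆
          + (4 : ℂ) • twoL n j k ⁅pauliX, pauliZ⁆ pauliZ) := by
    rw [lie_A1_twoL hjk, pauli_fact, twoL_smul_left hjk, twoL_smul_right hjk]
  rw [lie_smul, lie_smul, lie_smul, e1, lie_smul, lie_smul, lie_add, lie_add, e2, e3,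
    lie_smul, lie_smul, lie_add, lie_add, lie_smul, e1, e4]
  match_scalars <;> simp [Complex.I_mul_I, Complex.I_pow_four] <;> ring_nf <;> simp [Complex.I_pow_four]

lemma real_smul_eq {m : Type*} (c : ℝ) (M : Matrix m m ℂ) :
    c • M = ((c : ℂ)) • M := by
  ext i j
  simp [Matrix.smul_apply, Complex.real_smul]

lemma main_id (n : ℕ) (G : SimpleGraph (Fin n)) [DecidableRel G.Adj] :
    ⁅qaoaA1 n, ⁅qaoaA1 n, ⁅qaoaA1 n, qaoaA2 n G⁆⁆⁆
      = (-16 : ℝ) • ⁅qaoaA1 n, qaoaA2 n G⁆ := by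
  rw [real_smul_eq, qaoaA2, matrix_lie_sum, matrix_lie_sum, matrix_lie_sum]
  rw [Finset.smul_sum]
  push_cast
  refine Finset.sum_congr rfl fun p hp => ?_
  simp only [Finset.mem_filter] at hp
  exact edge_cube (ne_of_lt hp.2.2)

end Aux

theorem stmt17 (n : ℕ) (G : SimpleGraph (Fin n)) [DecidableRel G.Adj] :
    (∃ c : ℝ, c ≠ 0 ∧
      ⁅qaoaA1 n, ⁅qaoaA1 n, ⁅qaoaA1 n, qaoaA2 n G⁆⁆⁆ = c • ⁅qaoaA1 n, qaoaA2 n G⁆) ∧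
    ⁅qaoaA1 n, ⁅qaoaA1 n, ⁅qaoaA1 n, qaoaA2 n G⁆⁆⁆ =
      (-16 : ℝ) • ⁅qaoaA1 n, qaoaA2 n G⁆ ∧
    (∀ B ∈ ({qaoaA1 n, qaoaA2 n G} : Set (Matrix (Fin n → Fin 2) (Fin n → Fin 2) ℂ)),
      ∀ C ∈ ({qaoaA1 n, qaoaA2 n G} : Set (Matrix (Fin n → Fin 2) (Fin n → Fin 2) ℂ)),
        ⁅B, C⁆ ≠ 0 →
          ∃ k₁ ∈ ({qaoaA1 n, qaoaA2 n G} : Set (Matrix (Fin n → Fin 2) (Fin n → Fin 2) ℂ)),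
            ∃ k₂ ∈ ({qaoaA1 n, qaoaA2 n G} : Set (Matrix (Fin n → Fin 2) (Fin n → Fin 2) ℂ)),
              ∃ c : ℝ, c ≠ 0 ∧ ⁅k₂, ⁅k₁, ⁅B, C⁆⁆⁆ = c • ⁅B, C⁆) := by
  have hR := main_id n G
  have hA1mem : qaoaA1 n ∈ ({qaoaA1 n, qaoaA2 n G} :
      Set (Matrix (Fin n → Fin 2) (Fin n → Fin 2) ℂ)) := Set.mem_insert _ _
  refine ⟨⟨-16, by norm_num, hR⟩, hR, ?_⟩
  intro B hB C hC hne
  rcases hB with hB | hB <;> rcases hC with hC | hC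
  · exact absurd (by rw [hB, hC, Ring.lie_def, sub_self]) hne
  · refine ⟨qaoaA1 n, hA1mem, qaoaA1 n, hA1mem, -16, by norm_num, ?_⟩
    rw [hB, hC]; exact hR
  · refine ⟨qaoaA1 n, hA1mem, qaoaA1 n, hA1mem, -16, by norm_num, ?_⟩
    rw [hB, hC]
    have h2 : ⁅qaoaA2 n G, qaoaA1 n⁆ = -⁅qaoaA1 n, qaoaA2 n G⁆ := by
      rw [Ring.lie_def, Ring.lie_def, neg_sub]
    have hl : ∀ M N : Matrix (Fin n → Fin 2) (Fin n → Fin 2) ℂ, ⁅M, -N⁆ = -⁅M, N⁆ :=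
      fun M N => by rw [Ring.lie_def, Ring.lie_def]; noncomm_ring
    rw [h2, hl, hl, hR, smul_neg]
  · exact absurd (by rw [hB, hC, Ring.lie_def, sub_self]) hne
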